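/- For every s ∈ (0,1), there are exactly two 2-dimensional linear subspaces W of ℝ⁴ such that W has nonzero intersection with each of the four subspaces L(−1), L(0), L(1), L(s); that is, this instance of the problem of four lines has exactly two solutions, and both are real. -/

import Mathlib

/-- The vector (1, γ(t)) ∈ ℝ⁴, where γ(t) = (6t² − 1, (7/2)t³ + (3/2)t, −(1/2)t³ + (3/2)t). -/
noncomputable def vGamma (t : ℝ) : Fin 4 → ℝ :=
  ![1, 6 * t ^ 2 - 1, 7 / 2 * t ^ 3 + 3 / 2 * t, -(1 / 2) * t ^ 3 + 3 / 2 * t]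

/-- The vector (0, γ′(t)) ∈ ℝ⁴, where γ′(t) = (12t, (21/2)t² + 3/2, −(3/2)t² + 3/2). -/
noncomputable def vGamma' (t : ℝ) : Fin 4 → ℝ :=
  ![0, 12 * t, 21 / 2 * t ^ 2 + 3 / 2, -(3 / 2) * t ^ 2 + 3 / 2]

/-- L(t) ⊆ ℝ⁴: the 2-dimensional subspace spanned by (1, γ(t)) and (0, γ′(t)),
the projective closure of the tangent line to γ at γ(t). -/
noncomputable def Lhat (t : ℝ) : Submodule ℝ (Fin 4 → ℝ) :=
  Submodule.span ℝ {vGamma t, vGamma' t}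

noncomputable def wOne (s r : ℝ) : Fin 4 → ℝ := ![4, -24*r-4, 7*s, -s]
noncomputable def wTwo (s r : ℝ) : Fin 4 → ℝ := ![0, 6*s, -4-21*r, 4+3*r]
noncomputable def Wsol (s r : ℝ) : Submodule ℝ (Fin 4 → ℝ) :=
  Submodule.span ℝ {wOne s r, wTwo s r}

open Submodule Module

-- pair independence from a nonzero minor
lemma indep_pair {x y : Fin 4 → ℝ} {i j : Fin 4} (h : x i * y j - x j * y i ≠ 0) :
    LinearIndependent ℝ ![x, y] := by
  rw [LinearIndependent.pair_iff]
  intro a b hab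
  have hi := congrFun hab i
  have hj := congrFun hab j
  simp only [Pi.add_apply, Pi.smul_apply, smul_eq_mul, Pi.zero_apply] at hi hj
  constructor
  · by_contra ha
    apply h
    have h1 : a * (x i * y j - x j * y i) = 0 := by linear_combination y j * hi - y i * hj
    rcases mul_eq_zero.1 h1 with h' | h'
    · exact absurd h' ha
    · exact h'
  · by_contra hb
    apply h
    have h1 : b * (x i * y j - x j * y i) = 0 := by linear_combination x i * hj - x j * hi
    rcases mul_eq_zero.1 h1 with h' | h'
    · exact absurd h' hb
    · exact h'

lemma finrank_span_pair {x y : Fin 4 → ℝ} (h : LinearIndependent ℝ ![x, y]) :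
    Module.finrank ℝ (Submodule.span ℝ ({x, y} : Set (Fin 4 → ℝ))) = 2 := by
  have hr : ({x, y} : Set (Fin 4 → ℝ)) = Set.range ![x, y] := by
    simp [Set.range_comp]
    ext z
    simp [Fin.exists_fin_two]
    tauto
  rw [hr, finrank_span_eq_card h, Fintype.card_fin]

lemma exists_minor_ne_zero {x y : Fin 4 → ℝ} (h : LinearIndependent ℝ ![x, y]) :
    ¬ (∀ i j : Fin 4, x i * y j - x j * y i = 0) := by
  intro hq
  have hx : x ≠ 0 := by
    have := h.ne_zero 0
    simpa using this
  obtain ⟨i, hi⟩ : ∃ i, x i ≠ 0 := by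
    by_contra h'
    push_neg at h'
    exact hx (funext h')
  have hz : (y i) • x + (-(x i)) • y = 0 := by
    funext j
    have := hq i j
    simp only [Pi.add_apply, Pi.smul_apply, smul_eq_mul, Pi.zero_apply, neg_mul]
    nlinarith [hq j i]
  have := (LinearIndependent.pair_iff.1 h) (y i) (-(x i)) hz
  exact hi (by simpa using this.2)

lemma exists_basis_pair {W : Submodule ℝ (Fin 4 → ℝ)} (hW : Module.finrank ℝ W = 2) :
    ∃ u v : Fin 4 → ℝ, LinearIndependent ℝ ![u, v] ∧ W = Submodule.span ℝ {u, v} := by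
  have : FiniteDimensional ℝ W := inferInstance
  let b := Module.finBasisOfFinrankEq ℝ W hW
  refine ⟨b 0, b 1, ?_, ?_⟩
  · have hli : LinearIndependent ℝ (fun i => ((b i : W) : Fin 4 → ℝ)) :=
      b.linearIndependent.map' W.subtype W.ker_subtype
    have : ![(b 0 : Fin 4 → ℝ), (b 1 : Fin 4 → ℝ)] = fun i => ((b i : W) : Fin 4 → ℝ) := by
      funext i
      fin_cases i <;> rfl
    rw [this]
    exact hli
  · have hs : Submodule.span ℝ (Set.range b) = ⊤ := b.span_eq
    have : W = Submodule.map W.subtype (Submodule.span ℝ (Set.range b)) := by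
      rw [hs]; simp
    conv_lhs => rw [this]
    rw [Submodule.map_span]
    congr 1
    ext z
    simp only [Set.mem_image, Set.mem_range, Set.mem_insert_iff, Set.mem_singleton_iff]
    constructor
    · rintro ⟨w, ⟨i, rfl⟩, rfl⟩
      fin_cases i
      · left; rfl
      · right; rfl
    · rintro (rfl | rfl)
      · exact ⟨b 0, ⟨0, rfl⟩, rfl⟩
      · exact ⟨b 1, ⟨1, rfl⟩, rfl⟩


lemma det_expand (u v : Fin 4 → ℝ) (t : ℝ) :
    (Matrix.of ![u, v, vGamma t, vGamma' t]).det =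
      (u 0*v 1 - u 1*v 0) * (-12*t^3)
      + (u 0*v 2 - u 2*v 0) * (3*t^4 + 15/2*t^2 + 3/2)
      + (u 0*v 3 - u 3*v 0) * (21*t^4 - 39/2*t^2 - 3/2)
      + (u 1*v 2 - u 2*v 1) * (-3/2*t^2 + 3/2)
      + (u 1*v 3 - u 3*v 1) * (-(21/2*t^2 + 3/2))
      + (u 2*v 3 - u 3*v 2) * (12*t) := by
  rw [show (Matrix.of ![u, v, vGamma t, vGamma' t]) = Matrix.of ![u, v, vGamma t, vGamma' t] from rfl]
  rw [Matrix.det_succ_row_zero]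
  simp [Fin.sum_univ_succ, Matrix.det_fin_three, vGamma, vGamma', Matrix.submatrix_apply,
    show (Fin.succAbove 1 2 : Fin 4) = 3 by decide, show (Fin.succAbove 2 2 : Fin 4) = 3 by decide,
    show (Fin.succ 2 : Fin 4) = 3 by decide, show (Fin.castSucc 2 : Fin 4) = 2 by decide,
    show (Fin.succAbove 0 2 : Fin 4) = 3 by decide, show (Fin.succAbove 3 2 : Fin 4) = 2 by decide]
  ring

lemma det_zero_of_meet {u v : Fin 4 → ℝ} {t : ℝ}
    (h : Submodule.span ℝ {u, v} ⊓ Lhat t ≠ ⊥) :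
    (Matrix.of ![u, v, vGamma t, vGamma' t]).det = 0 := by
  obtain ⟨x, hx, hx0⟩ := (Submodule.ne_bot_iff _).1 h
  rw [Submodule.mem_inf] at hx
  obtain ⟨a, b, hab⟩ := Submodule.mem_span_pair.1 hx.1
  obtain ⟨c, d, hcd⟩ := Submodule.mem_span_pair.1 hx.2
  rw [← Matrix.exists_vecMul_eq_zero_iff]
  refine ⟨![a, b, -c, -d], ?_, ?_⟩
  · intro h0
    apply hx0
    have ha : a = 0 := by simpa using congrFun h0 0
    have hb : b = 0 := by simpa using congrFun h0 1
    rw [← hab, ha, hb]; simp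
  · funext j
    have h1 := congrFun hab j
    have h2 := congrFun hcd j
    simp only [Pi.add_apply, Pi.smul_apply, smul_eq_mul] at h1 h2
    simp [Matrix.vecMul, dotProduct, Fin.sum_univ_four]
    linear_combination h1 - h2

lemma meet_of {s r t : ℝ} (a b c d : ℝ) (ha : a ≠ 0)
    (h : c • wOne s r + d • wTwo s r = a • vGamma t + b • vGamma' t) :
    Wsol s r ⊓ Lhat t ≠ ⊥ := by
  rw [Submodule.ne_bot_iff]
  refine ⟨a • vGamma t + b • vGamma' t, Submodule.mem_inf.2 ⟨?_, ?_⟩, ?_⟩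
  · exact Submodule.mem_span_pair.2 ⟨c, d, h⟩
  · exact Submodule.mem_span_pair.2 ⟨a, b, rfl⟩
  · intro h0
    have h1 := congrFun h0 0
    simp [vGamma, vGamma'] at h1
    exact ha h1

lemma forward {s r : ℝ} (hs0 : 0 < s) (hs1 : s < 1) (hr : 3*r^2 + r = s^2/4) :
    Module.finrank ℝ (Wsol s r) = 2 ∧
      Wsol s r ⊓ Lhat (-1) ≠ ⊥ ∧ Wsol s r ⊓ Lhat 0 ≠ ⊥ ∧ Wsol s r ⊓ Lhat 1 ≠ ⊥ ∧
        Wsol s r ⊓ Lhat s ≠ ⊥ := by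
  refine ⟨?_, ?_, ?_, ?_, ?_⟩
  · apply finrank_span_pair
    apply indep_pair (i := 0) (j := 1)
    simp [wOne, wTwo]
    nlinarith
  · refine meet_of (4+s) (2+s+2*r) ((4+s)/4) (r-1) (by nlinarith) ?_
    funext j
    fin_cases j <;>
      simp [wOne, wTwo, vGamma, vGamma'] <;>
      (first | ring1 | linarith [hr])
  · refine meet_of s (2*r) (s/4) r (by positivity) ?_
    funext j
    fin_cases j <;>
      simp [wOne, wTwo, vGamma, vGamma'] <;>
      (first | ring1 | linarith [hr])
  · refine meet_of (4-s) (s-2-2*r) ((4-s)/4) (1-r) (by nlinarith) ?_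
    funext j
    fin_cases j <;>
      simp [wOne, wTwo, vGamma, vGamma'] <;>
      (first | ring1 | linarith [hr])
  · refine meet_of (3*s) (-2*r-s^2) (3*s/4) (s^2-r) (by positivity) ?_
    funext j
    fin_cases j <;>
      simp [wOne, wTwo, vGamma, vGamma'] <;>
      (first | ring1 | linarith [hr])

set_option maxHeartbeats 2000000 in
lemma backward {s : ℝ} (hs0 : 0 < s) (hs1 : s < 1) {W : Submodule ℝ (Fin 4 → ℝ)}
    (hW : Module.finrank ℝ W = 2)
    (hm1 : W ⊓ Lhat (-1) ≠ ⊥) (hm0 : W ⊓ Lhat 0 ≠ ⊥) (hm2 : W ⊓ Lhat 1 ≠ ⊥)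
    (hms : W ⊓ Lhat s ≠ ⊥) :
    ∃ r : ℝ, 3*r^2 + r = s^2/4 ∧ W = Wsol s r := by
  obtain ⟨u, v, hind, rfl⟩ := exists_basis_pair hW
  have D1 := det_zero_of_meet hm1
  have D0 := det_zero_of_meet hm0
  have D2 := det_zero_of_meet hm2
  have Ds := det_zero_of_meet hms
  rw [det_expand] at D1 D0 D2 Ds
  have hq13 : (u 1 * v 3 - u 3 * v 1) = (u 0 * v 2 - u 2 * v 0) := by
    linear_combination (-(1:ℝ)/24)*D1 - ((1:ℝ)/24)*D2
  have hq23 : (u 2 * v 3 - u 3 * v 2) = (u 0 * v 1 - u 1 * v 0) := by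
    linear_combination (-(1:ℝ)/24)*D1 + ((1:ℝ)/24)*D2
  have hq12 : (u 1 * v 2 - u 2 * v 1) = (u 0 * v 3 - u 3 * v 0) := by
    linear_combination ((2:ℝ)/3)*D0 - ((1:ℝ)/24)*D1 - ((1:ℝ)/24)*D2
  have hA3 : 3*s*(s^2-1)*(s*((u 0 * v 2 - u 2 * v 0) + 7*(u 0 * v 3 - u 3 * v 0)) - 4*(u 0 * v 1 - u 1 * v 0)) = 0 := by
    linear_combination Ds - ((s^2-s)/2)*D1 - ((s^2+s)/2)*D2 - (1-s^2)*D0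
  have hfac : (3*s*(s^2-1)) ≠ 0 := by nlinarith
  have hAeq : s*((u 0 * v 2 - u 2 * v 0) + 7*(u 0 * v 3 - u 3 * v 0)) = 4*(u 0 * v 1 - u 1 * v 0) := by
    rcases mul_eq_zero.1 hA3 with h | h
    · exact absurd h hfac
    · linarith
  have hPl2 : (u 0 * v 2 - u 2 * v 0)^2 - (u 0 * v 3 - u 3 * v 0)^2 = (u 0 * v 1 - u 1 * v 0)^2 := by
    linear_combination (u 0 * v 1 - u 1 * v 0)*hq23 - (u 0 * v 2 - u 2 * v 0)*hq13 + (u 0 * v 3 - u 3 * v 0)*hq12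
  have hAne : ((u 0 * v 2 - u 2 * v 0) + 7*(u 0 * v 3 - u 3 * v 0)) ≠ 0 := by
    intro h0
    have hz01 : (u 0 * v 1 - u 1 * v 0) = 0 := by
      have h4 : (4:ℝ)*(u 0 * v 1 - u 1 * v 0) = 0 := by rw [← hAeq, h0, mul_zero]
      linarith
    have h48 : 48*(u 0 * v 3 - u 3 * v 0)^2 = 0 := by
      linear_combination hPl2 - ((u 0 * v 2 - u 2 * v 0) - 7*(u 0 * v 3 - u 3 * v 0))*h0 + (u 0 * v 1 - u 1 * v 0)*hz01
    have hz03 : (u 0 * v 3 - u 3 * v 0) = 0 := by nlinarith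
    have hz02 : (u 0 * v 2 - u 2 * v 0) = 0 := by linarith
    have hz12 : (u 1 * v 2 - u 2 * v 1) = 0 := by linarith [hq12]
    have hz13 : (u 1 * v 3 - u 3 * v 1) = 0 := by linarith [hq13]
    have hz23 : (u 2 * v 3 - u 3 * v 2) = 0 := by linarith [hq23]
    apply exists_minor_ne_zero hind
    intro i j
    fin_cases i <;> fin_cases j
    exacts [(show u 0 * v 0 - u 0 * v 0 = 0 by ring),
      (show u 0 * v 1 - u 1 * v 0 = 0 by linarith [hz01]),
      (show u 0 * v 2 - u 2 * v 0 = 0 by linarith [hz02]),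
      (show u 0 * v 3 - u 3 * v 0 = 0 by linarith [hz03]),
      (show u 1 * v 0 - u 0 * v 1 = 0 by linarith [hz01]),
      (show u 1 * v 1 - u 1 * v 1 = 0 by ring),
      (show u 1 * v 2 - u 2 * v 1 = 0 by linarith [hz12]),
      (show u 1 * v 3 - u 3 * v 1 = 0 by linarith [hz13]),
      (show u 2 * v 0 - u 0 * v 2 = 0 by linarith [hz02]),
      (show u 2 * v 1 - u 1 * v 2 = 0 by linarith [hz12]),
      (show u 2 * v 2 - u 2 * v 2 = 0 by ring),
      (show u 2 * v 3 - u 3 * v 2 = 0 by linarith [hz23]),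
      (show u 3 * v 0 - u 0 * v 3 = 0 by linarith [hz03]),
      (show u 3 * v 1 - u 1 * v 3 = 0 by linarith [hz13]),
      (show u 3 * v 2 - u 2 * v 3 = 0 by linarith [hz23]),
      (show u 3 * v 3 - u 3 * v 3 = 0 by ring)]
  have hs2A : s^2*((u 0 * v 2 - u 2 * v 0) + 7*(u 0 * v 3 - u 3 * v 0))^2 = 16*(u 0 * v 1 - u 1 * v 0)^2 := by
    linear_combination (s*((u 0 * v 2 - u 2 * v 0) + 7*(u 0 * v 3 - u 3 * v 0)) + 4*(u 0 * v 1 - u 1 * v 0))*hAeq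
  obtain ⟨r, hrdef⟩ : ∃ r : ℝ, 3*((u 0 * v 2 - u 2 * v 0) + 7*(u 0 * v 3 - u 3 * v 0))*r = 24*(u 0 * v 3 - u 3 * v 0) - 4*((u 0 * v 2 - u 2 * v 0) + 7*(u 0 * v 3 - u 3 * v 0)) :=
    ⟨(24*(u 0 * v 3 - u 3 * v 0) - 4*((u 0 * v 2 - u 2 * v 0) + 7*(u 0 * v 3 - u 3 * v 0)))/(3*((u 0 * v 2 - u 2 * v 0) + 7*(u 0 * v 3 - u 3 * v 0))), by rw [mul_comm]; exact div_mul_cancel₀ _ (mul_ne_zero three_ne_zero hAne)⟩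
  have hq03v : 24*(u 0 * v 3 - u 3 * v 0) = ((u 0 * v 2 - u 2 * v 0) + 7*(u 0 * v 3 - u 3 * v 0))*(3*r+4) := by linear_combination -hrdef
  have hq02v : 24*(u 0 * v 2 - u 2 * v 0) = ((u 0 * v 2 - u 2 * v 0) + 7*(u 0 * v 3 - u 3 * v 0))*(-21*r-4) := by linear_combination 7*hrdef
  have hkey : 3*((u 0 * v 2 - u 2 * v 0) + 7*(u 0 * v 3 - u 3 * v 0))^2*(3*r^2 + r - s^2/4) = 0 := by
    linear_combination (3*((u 0 * v 2 - u 2 * v 0) + 7*(u 0 * v 3 - u 3 * v 0))*r + 24*(u 0 * v 3 - u 3 * v 0) - 4*((u 0 * v 2 - u 2 * v 0) + 7*(u 0 * v 3 - u 3 * v 0)) + ((u 0 * v 2 - u 2 * v 0) + 7*(u 0 * v 3 - u 3 * v 0)))*hrdef + 12*hPl2 - (3/4)*hs2A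
  have hrq : 3*r^2 + r = s^2/4 := by
    rcases mul_eq_zero.1 hkey with h | h
    · exfalso
      apply hAne
      have h2 : ((u 0 * v 2 - u 2 * v 0) + 7*(u 0 * v 3 - u 3 * v 0))^2 = 0 := by linarith
      exact (pow_eq_zero_iff two_ne_zero).1 h2
    · linarith
  have hq01ne : (u 0 * v 1 - u 1 * v 0) ≠ 0 := by
    intro h0
    rw [h0, mul_zero] at hAeq
    rcases mul_eq_zero.1 hAeq with h | h
    · exact absurd h (ne_of_gt hs0)
    · exact hAne h
  have key1 : (4*v 1 - (-24*r-4)*v 0) • u + ((-24*r-4)*u 0 - 4*u 1) • v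
      = (u 0 * v 1 - u 1 * v 0) • wOne s r := by
    funext j
    fin_cases j <;> simp [wOne] <;>
      (first
        | ring1
        | linear_combination (-4)*hq12 + (-(1:ℝ)/6)*hq03v + ((-24*r-4)/24)*hq02v
            + (7*s/4)*hAeq + 7*((u 0 * v 2 - u 2 * v 0) + 7*(u 0 * v 3 - u 3 * v 0))*hrq
        | linear_combination (-4)*hq13 + (-(1:ℝ)/6)*hq02v + ((-24*r-4)/24)*hq03v
            - (s/4)*hAeq - ((u 0 * v 2 - u 2 * v 0) + 7*(u 0 * v 3 - u 3 * v 0))*hrq)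
  have key2 : (-6*s*v 0) • u + (6*s*u 0) • v = (u 0 * v 1 - u 1 * v 0) • wTwo s r := by
    funext j
    fin_cases j <;> simp [wTwo] <;>
      (first
        | ring1
        | linear_combination (s/4)*hq02v - ((4+21*r)/4)*hAeq
        | linear_combination (s/4)*hq03v + ((4+3*r)/4)*hAeq)
  have humem : u ∈ Submodule.span ℝ {u, v} := Submodule.subset_span (by simp)
  have hvmem : v ∈ Submodule.span ℝ {u, v} := Submodule.subset_span (by simp)
  have hw1 : wOne s r ∈ Submodule.span ℝ {u, v} := by
    have heq : wOne s r = ((u 0 * v 1 - u 1 * v 0))⁻¹ • ((u 0 * v 1 - u 1 * v 0) • wOne s r) := by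
      rw [inv_smul_smul₀ hq01ne]
    rw [heq, ← key1]
    exact Submodule.smul_mem _ _
      (add_mem (Submodule.smul_mem _ _ humem) (Submodule.smul_mem _ _ hvmem))
  have hw2 : wTwo s r ∈ Submodule.span ℝ {u, v} := by
    have heq : wTwo s r = ((u 0 * v 1 - u 1 * v 0))⁻¹ • ((u 0 * v 1 - u 1 * v 0) • wTwo s r) := by
      rw [inv_smul_smul₀ hq01ne]
    rw [heq, ← key2]
    exact Submodule.smul_mem _ _
      (add_mem (Submodule.smul_mem _ _ humem) (Submodule.smul_mem _ _ hvmem))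
  have hle : Wsol s r ≤ Submodule.span ℝ {u, v} := by
    apply Submodule.span_le.mpr
    rintro x hx
    simp only [Set.mem_insert_iff, Set.mem_singleton_iff] at hx
    rcases hx with rfl | rfl
    exacts [hw1, hw2]
  have hfr2 : Module.finrank ℝ (Wsol s r) = 2 := by
    apply finrank_span_pair
    apply indep_pair (i := 0) (j := 1)
    simp [wOne, wTwo]
    nlinarith
  exact ⟨r, hrq, (Submodule.eq_of_le_of_finrank_le hle (le_of_eq (hW.trans hfr2.symm))).symm⟩

/-- For every s ∈ (0,1), there are exactly two 2-dimensional linear subspaces W of ℝ⁴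
meeting each of L(−1), L(0), L(1), L(s) nontrivially: this instance of the problem of
four lines has exactly two solutions, and both are real. -/
theorem stmt_6 (s : ℝ) (hs : s ∈ Set.Ioo (0 : ℝ) 1) :
    {W : Submodule ℝ (Fin 4 → ℝ) | Module.finrank ℝ W = 2 ∧
        W ⊓ Lhat (-1) ≠ ⊥ ∧ W ⊓ Lhat 0 ≠ ⊥ ∧ W ⊓ Lhat 1 ≠ ⊥ ∧
          W ⊓ Lhat s ≠ ⊥}.ncard = 2 := by
  obtain ⟨hs0, hs1⟩ := hs
  have hnn : (0:ℝ) ≤ 1 + 3*s^2 := by positivity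
  have hee : (Real.sqrt (1 + 3*s^2))^2 = 1 + 3*s^2 := Real.sq_sqrt hnn
  set e := Real.sqrt (1 + 3*s^2) with he0
  have he1 : 1 ≤ e := by nlinarith [Real.sqrt_nonneg (1 + 3*s^2)]
  have he2 : e < 2 := by nlinarith
  have hr1 : 3*((-1+e)/6)^2 + (-1+e)/6 = s^2/4 := by linear_combination (1/12)*hee
  have hr2 : 3*((-1-e)/6)^2 + (-1-e)/6 = s^2/4 := by linear_combination (1/12)*hee
  have hset : {W : Submodule ℝ (Fin 4 → ℝ) | Module.finrank ℝ W = 2 ∧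
        W ⊓ Lhat (-1) ≠ ⊥ ∧ W ⊓ Lhat 0 ≠ ⊥ ∧ W ⊓ Lhat 1 ≠ ⊥ ∧
          W ⊓ Lhat s ≠ ⊥} = {Wsol s ((-1+e)/6), Wsol s ((-1-e)/6)} := by
    ext W
    simp only [Set.mem_setOf_eq, Set.mem_insert_iff, Set.mem_singleton_iff]
    constructor
    · rintro ⟨hW, hm1, hm0, hm2, hms⟩
      obtain ⟨r, hr, rfl⟩ := backward hs0 hs1 hW hm1 hm0 hm2 hms
      have hfac : (r - (-1+e)/6)*(r - (-1-e)/6) = 0 := by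
        linear_combination (1/3)*hr - (1/36)*hee
      rcases mul_eq_zero.1 hfac with h | h
      · left; rw [show r = (-1+e)/6 by linarith]
      · right; rw [show r = (-1-e)/6 by linarith]
    · rintro (rfl | rfl)
      · exact forward hs0 hs1 hr1
      · exact forward hs0 hs1 hr2
  rw [hset]
  apply Set.ncard_pair
  intro heq
  have hw1mem : wOne s ((-1+e)/6) ∈ Wsol s ((-1-e)/6) := by
    rw [← heq]
    exact Submodule.subset_span (by simp)
  obtain ⟨a, b, hab⟩ := Submodule.mem_span_pair.1 hw1mem
  have h0 := congrFun hab 0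
  have h1 := congrFun hab 1
  have h3 := congrFun hab 3
  simp [wOne, wTwo] at h0 h1 h3
  -- h0 : a * 4 = 4, h3 : a * (-s) + b * (4 + 3*((-1-e)/6)) = -s
  have ha : a = 1 := by linarith
  have hb : b = 0 := by
    have hpos : (4 + 3*((-1-e)/6)) > 0 := by nlinarith
    nlinarith [h3]
  rw [ha, hb] at h1
  nlinarith [h1]
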